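/- (HJB equation for the backward drift.) Let d ∈ ℕ, σ > 0, f : ℝ × ℝ^d → ℝ^d continuously differentiable in x, V : ℝ × ℝ^d → ℝ differentiable in t and twice continuously differentiable in x satisfying the Hamilton–Jacobi–Bellman equation ∂_t V + ⟨f, ∇V⟩ + (σ²/2)ΔV − (σ²/2)‖∇V‖² = 0 at every (t,x), and ρ : ℝ × ℝ^d → (0,∞) differentiable in t and twice continuously differentiable in x satisfying the Fokker–Planck equation ∂_t ρ(t,x) = −∇·(ρ(t,·)·(f(t,·) − σ²∇V(t,·)))(x) + (σ²/2)·Δρ(t,x) at every (t,x). Then ψ := log ρ + V satisfies the backward-drift HJB equation: for all (t,x), ∂_t ψ(t,x) + ⟨f(t,x), ∇ψ(t,x)⟩ + (∇·f(t,·))(x) − (σ²/2)·Δψ(t,x) − (σ²/2)·‖∇ψ(t,x)‖² = 0. -/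

import Mathlib

set_option maxHeartbeats 1000000


open scoped RealInnerProductSpace

/-- The Laplacian of `f : ℝ^d → ℝ` at `x`: trace of the second Fréchet derivative. -/
noncomputable def lap {d : ℕ} (f : EuclideanSpace ℝ (Fin d) → ℝ)
    (x : EuclideanSpace ℝ (Fin d)) : ℝ :=
  ∑ i, fderiv ℝ (fderiv ℝ f) x (EuclideanSpace.single i 1) (EuclideanSpace.single i 1)

/-- The divergence of a vector field `w : ℝ^d → ℝ^d` at `x`: trace of the Fréchet
derivative of `w` at `x`. -/
noncomputable def diverg {d : ℕ} (w : EuclideanSpace ℝ (Fin d) → EuclideanSpace ℝ (Fin d))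
    (x : EuclideanSpace ℝ (Fin d)) : ℝ :=
  ∑ i, ⟪fderiv ℝ w x (EuclideanSpace.single i 1), EuclideanSpace.single i 1⟫

section Aux

variable {d : ℕ}

private lemma parseval9 (u v : EuclideanSpace ℝ (Fin d)) :
    ∑ i, ⟪u, EuclideanSpace.single i 1⟫ * ⟪v, EuclideanSpace.single i 1⟫ = ⟪u, v⟫ := by
  have h := (EuclideanSpace.basisFun (Fin d) ℝ).sum_inner_mul_inner u v
  simp only [EuclideanSpace.basisFun_apply] at h
  simpa [real_inner_comm] using h

private lemma grad_inner9 (g : EuclideanSpace ℝ (Fin d) → ℝ) (x v : EuclideanSpace ℝ (Fin d)) :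
    ⟪gradient g x, v⟫ = fderiv ℝ g x v :=
  InnerProductSpace.toDual_symm_apply

end Aux

/-- HJB equation for the backward drift: if `V` solves the (forward) HJB equation and
`ρ > 0` solves the Fokker–Planck equation with drift `f - σ²∇V`, then `ψ := log ρ + V`
satisfies `∂ₜψ + ⟨f,∇ψ⟩ + ∇·f - (σ²/2)Δψ - (σ²/2)‖∇ψ‖² = 0`. -/
theorem stmt9 {d : ℕ} (σ : ℝ) (hσ : 0 < σ)
    (f : ℝ → EuclideanSpace ℝ (Fin d) → EuclideanSpace ℝ (Fin d))
    (hf : ∀ t, ContDiff ℝ 1 (f t))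
    (V : ℝ → EuclideanSpace ℝ (Fin d) → ℝ)
    (hVt : ∀ x, Differentiable ℝ fun t => V t x)
    (hVx : ∀ t, ContDiff ℝ 2 (V t))
    (hHJB : ∀ t x, deriv (fun s => V s x) t + ⟪f t x, gradient (V t) x⟫
      + σ ^ 2 / 2 * lap (V t) x - σ ^ 2 / 2 * ‖gradient (V t) x‖ ^ 2 = 0)
    (ρ : ℝ → EuclideanSpace ℝ (Fin d) → ℝ)
    (hρpos : ∀ t x, 0 < ρ t x)
    (hρt : ∀ x, Differentiable ℝ fun t => ρ t x)
    (hρx : ∀ t, ContDiff ℝ 2 (ρ t))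
    (hFP : ∀ t x, deriv (fun s => ρ s x) t
      = -diverg (fun y => ρ t y • (f t y - σ ^ 2 • gradient (V t) y)) x
        + σ ^ 2 / 2 * lap (ρ t) x) :
    ∀ t x, deriv (fun s => Real.log (ρ s x) + V s x) t
      + ⟪f t x, gradient (fun y => Real.log (ρ t y) + V t y) x⟫
      + diverg (f t) x
      - σ ^ 2 / 2 * lap (fun y => Real.log (ρ t y) + V t y) x
      - σ ^ 2 / 2 * ‖gradient (fun y => Real.log (ρ t y) + V t y) x‖ ^ 2 = 0 := by
  intro t x
  have hr : ρ t x ≠ 0 := (hρpos t x).ne'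
  have hρd : Differentiable ℝ (ρ t) := (hρx t).differentiable (by norm_num)
  have hVd : Differentiable ℝ (V t) := (hVx t).differentiable (by norm_num)
  have hρ'd : Differentiable ℝ (fderiv ℝ (ρ t)) :=
    ((hρx t).fderiv_right (by norm_num)).differentiable one_ne_zero
  have hV'd : Differentiable ℝ (fderiv ℝ (V t)) :=
    ((hVx t).fderiv_right (by norm_num)).differentiable one_ne_zero
  have hfd : Differentiable ℝ (f t) := (hf t).differentiable one_ne_zero
  set G := gradient (ρ t) x with hGdef
  set W := gradient (V t) x with hWdef
  -- time derivative
  have ht1 : deriv (fun s => Real.log (ρ s x) + V s x) t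
      = deriv (fun s => ρ s x) t / ρ t x + deriv (fun s => V s x) t :=
    (((hρt x t).hasDerivAt.log hr).add (hVt x t).hasDerivAt).deriv
  -- first space derivative of ψ
  have hψ1 : ∀ y, HasFDerivAt (fun z => Real.log (ρ t z) + V t z)
      ((ρ t y)⁻¹ • fderiv ℝ (ρ t) y + fderiv ℝ (V t) y) y := fun y =>
    ((hρd y).hasFDerivAt.log (hρpos t y).ne').add (hVd y).hasFDerivAt
  have hfdψ : fderiv ℝ (fun z => Real.log (ρ t z) + V t z)
      = fun y => (ρ t y)⁻¹ • fderiv ℝ (ρ t) y + fderiv ℝ (V t) y :=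
    funext fun y => (hψ1 y).fderiv
  have hgrad : gradient (fun z => Real.log (ρ t z) + V t z) x = (ρ t x)⁻¹ • G + W := by
    show (InnerProductSpace.toDual ℝ _).symm _ = _
    rw [(hψ1 x).fderiv, map_add, map_smul]
    rfl
  -- second space derivative of ψ
  have hinv : HasFDerivAt (fun y => (ρ t y)⁻¹)
      ((-(ρ t x ^ 2)⁻¹) • fderiv ℝ (ρ t) x) x :=
    (hasDerivAt_inv hr).comp_hasFDerivAt x (hρd x).hasFDerivAt
  have hψ2 : fderiv ℝ (fderiv ℝ (fun z => Real.log (ρ t z) + V t z)) x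
      = ((ρ t x)⁻¹ • fderiv ℝ (fderiv ℝ (ρ t)) x
          + ((-(ρ t x ^ 2)⁻¹) • fderiv ℝ (ρ t) x).smulRight (fderiv ℝ (ρ t) x))
        + fderiv ℝ (fderiv ℝ (V t)) x := by
    rw [hfdψ]
    exact ((hinv.smul (hρ'd x).hasFDerivAt).add (hV'd x).hasFDerivAt).fderiv
  have hGi : ∀ i : Fin d, ⟪G, EuclideanSpace.single i 1⟫
      = fderiv ℝ (ρ t) x (EuclideanSpace.single i 1) := fun i => grad_inner9 _ _ _
  have hWi : ∀ i : Fin d, ⟪W, EuclideanSpace.single i 1⟫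
      = fderiv ℝ (V t) x (EuclideanSpace.single i 1) := fun i => grad_inner9 _ _ _
  have hnormG : ∑ i, fderiv ℝ (ρ t) x (EuclideanSpace.single i 1)
      * fderiv ℝ (ρ t) x (EuclideanSpace.single i 1) = ‖G‖ ^ 2 := by
    simp_rw [← hGi]
    rw [parseval9, real_inner_self_eq_norm_sq]
  -- Laplacian of ψ
  have hlap : lap (fun z => Real.log (ρ t z) + V t z) x
      = (ρ t x)⁻¹ * lap (ρ t) x - (ρ t x ^ 2)⁻¹ * ‖G‖ ^ 2 + lap (V t) x := by
    rw [← hnormG]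
    simp only [lap]
    rw [Finset.mul_sum, Finset.mul_sum, ← Finset.sum_sub_distrib, ← Finset.sum_add_distrib]
    refine Finset.sum_congr rfl fun i _ => ?_
    rw [hψ2]
    simp only [ContinuousLinearMap.add_apply, ContinuousLinearMap.smul_apply,
      ContinuousLinearMap.smulRight_apply, smul_eq_mul]
    ring
  -- the gradient of V as a differentiable map
  set L : (EuclideanSpace ℝ (Fin d) →L[ℝ] ℝ) →L[ℝ] EuclideanSpace ℝ (Fin d) :=
    ((InnerProductSpace.toDual ℝ (EuclideanSpace ℝ (Fin d))).symm.toContinuousLinearEquiv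
      : (EuclideanSpace ℝ (Fin d) →L[ℝ] ℝ) ≃L[ℝ]
        EuclideanSpace ℝ (Fin d)).toContinuousLinearMap with hLdef
  have hLapp : ∀ (T : EuclideanSpace ℝ (Fin d) →L[ℝ] ℝ) (v : EuclideanSpace ℝ (Fin d)),
      ⟪L T, v⟫ = T v := fun T v => InnerProductSpace.toDual_symm_apply
  have hgV : ∀ y, HasFDerivAt (gradient (V t))
      (L.comp (fderiv ℝ (fderiv ℝ (V t)) y)) y := fun y =>
    (L.hasFDerivAt.comp y (hV'd y).hasFDerivAt :)
  -- divergence of the Fokker–Planck drift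
  have hu : HasFDerivAt (fun z => f t z - σ ^ 2 • gradient (V t) z)
      (fderiv ℝ (f t) x - σ ^ 2 • L.comp (fderiv ℝ (fderiv ℝ (V t)) x)) x :=
    (hfd x).hasFDerivAt.sub ((hgV x).const_smul (σ ^ 2))
  have hw : HasFDerivAt (fun y => ρ t y • (f t y - σ ^ 2 • gradient (V t) y))
      (ρ t x • (fderiv ℝ (f t) x - σ ^ 2 • L.comp (fderiv ℝ (fderiv ℝ (V t)) x))
        + (fderiv ℝ (ρ t) x).smulRight (f t x - σ ^ 2 • W)) x :=
    (hρd x).hasFDerivAt.smul hu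
  have hinnerGf : ∑ i, fderiv ℝ (ρ t) x (EuclideanSpace.single i 1)
      * ⟪f t x, EuclideanSpace.single i 1⟫ = ⟪G, f t x⟫ := by
    simp_rw [← hGi]; exact parseval9 _ _
  have hinnerGW : ∑ i, fderiv ℝ (ρ t) x (EuclideanSpace.single i 1)
      * ⟪W, EuclideanSpace.single i 1⟫ = ⟪G, W⟫ := by
    simp_rw [← hGi]; exact parseval9 _ _
  have hdiv : diverg (fun y => ρ t y • (f t y - σ ^ 2 • gradient (V t) y)) x
      = ρ t x * diverg (f t) x - ρ t x * σ ^ 2 * lap (V t) x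
        + (⟪G, f t x⟫ - σ ^ 2 * ⟪G, W⟫) := by
    rw [← hinnerGf, ← hinnerGW]
    simp only [diverg, lap]
    rw [hw.fderiv, Finset.mul_sum, Finset.mul_sum, Finset.mul_sum,
      ← Finset.sum_sub_distrib, ← Finset.sum_sub_distrib, ← Finset.sum_add_distrib]
    refine Finset.sum_congr rfl fun i _ => ?_
    simp only [ContinuousLinearMap.add_apply, ContinuousLinearMap.smul_apply,
      ContinuousLinearMap.smulRight_apply, ContinuousLinearMap.sub_apply,
      ContinuousLinearMap.coe_comp', Function.comp_apply]
    simp only [inner_add_left, inner_sub_left, real_inner_smul_left, hLapp]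
    ring
  -- the inner-product term
  have hin : ⟪f t x, (ρ t x)⁻¹ • G + W⟫ = (ρ t x)⁻¹ * ⟪G, f t x⟫ + ⟪f t x, W⟫ := by
    rw [inner_add_right, real_inner_smul_right, real_inner_comm G (f t x)]
  -- norm-squared of the gradient of ψ
  have hnψ : ‖(ρ t x)⁻¹ • G + W‖ ^ 2
      = ((ρ t x)⁻¹) ^ 2 * ‖G‖ ^ 2 + 2 * ((ρ t x)⁻¹ * ⟪G, W⟫) + ‖W‖ ^ 2 := by
    rw [norm_add_sq_real, real_inner_smul_left, norm_smul, mul_pow, Real.norm_eq_abs, sq_abs]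
  -- assemble
  have hA := hFP t x
  rw [hdiv] at hA
  have hB := hHJB t x
  rw [ht1, hgrad, hin, hlap, hnψ]
  rw [← hWdef] at hB
  have hrr : ρ t x * (ρ t x)⁻¹ = 1 := mul_inv_cancel₀ hr
  linear_combination hB + (ρ t x)⁻¹ * hA
    - (diverg (f t) x - σ ^ 2 * lap (V t) x) * hrr
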